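/- If π is a set partition of [k] and π^c its complement, then the number of set partitions of [n] avoiding π equals the number avoiding π^c. -/

import Mathlib

/-- The set partition `σ` of `[n]` (as an equivalence relation on `Fin n`)
contains the pattern `π` (a set partition of `[k]`): some increasing choice of
`k` elements of `[n]` has the same same-block relation as `π`. -/
def SContains {n k : ℕ} (σ : Setoid (Fin n)) (π : Setoid (Fin k)) : Prop :=
  ∃ f : Fin k → Fin n, StrictMono f ∧ ∀ a b : Fin k, σ.r (f a) (f b) ↔ π.r a b

/-- The set partition associated to an RGF word: `i` and `j` are in the same
block iff the letters agree. -/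
def pat (l : List ℕ) : Setoid (Fin l.length) := Setoid.ker l.get

lemma comap_rev_comap_rev {n : ℕ} (σ : Setoid (Fin n)) :
    Setoid.comap Fin.rev (Setoid.comap Fin.rev σ) = σ := by
  ext a b
  show σ.r a.rev.rev b.rev.rev ↔ σ.r a b
  simp [Fin.rev_rev]

lemma scontains_comap {n k : ℕ} (σ : Setoid (Fin n)) (π : Setoid (Fin k))
    (h : SContains σ π) :
    SContains (Setoid.comap Fin.rev σ) (Setoid.comap Fin.rev π) := by
  obtain ⟨f, hf, hrel⟩ := h
  refine ⟨fun a => (f a.rev).rev, ?_, ?_⟩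
  · intro a b hab
    exact Fin.rev_lt_rev.mpr (hf (Fin.rev_lt_rev.mpr hab))
  · intro a b
    show σ.r (f a.rev).rev.rev (f b.rev).rev.rev ↔ π.r a.rev b.rev
    simpa [Fin.rev_rev] using hrel a.rev b.rev

lemma scontains_comap_iff {n k : ℕ} (σ : Setoid (Fin n)) (π : Setoid (Fin k)) :
    SContains (Setoid.comap Fin.rev σ) (Setoid.comap Fin.rev π) ↔ SContains σ π := by
  constructor
  · intro h
    have := scontains_comap _ _ h
    rwa [comap_rev_comap_rev, comap_rev_comap_rev] at this
  · exact scontains_comap _ _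

theorem stmt3 (k n : ℕ) (π : Setoid (Fin k)) :
    Nat.card {σ : Setoid (Fin n) // ¬ SContains σ π} =
    Nat.card {σ : Setoid (Fin n) // ¬ SContains σ (Setoid.comap Fin.rev π)} := by
  refine Nat.card_congr ⟨fun σ => ⟨Setoid.comap Fin.rev σ.1, ?_⟩,
    fun σ => ⟨Setoid.comap Fin.rev σ.1, ?_⟩, fun σ => ?_, fun σ => ?_⟩
  · intro h
    have h2 := scontains_comap _ _ h
    rw [comap_rev_comap_rev, comap_rev_comap_rev] at h2
    exact σ.2 h2
  · intro h
    have h2 := scontains_comap _ _ h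
    rw [comap_rev_comap_rev] at h2
    exact σ.2 h2
  · exact Subtype.ext (comap_rev_comap_rev _)
  · exact Subtype.ext (comap_rev_comap_rev _)
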